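/- Let Ω be a nonzero non-atomic measure space, 1 ≤ p < ∞, and let φ be a disintegration of L^p(Ω) with ‖φ(λ)‖_p = 1, whose domain tree is finitely branching at every node that has at least one child with nonzero image. Then for every ε > 0 there exists n such that ‖φ(ν)‖_p < ε for every node ν of length n in the domain of φ. -/

import Mathlib

open MeasureTheory Set
open scoped ENNReal

section Defs

variable {X : Type*} [MeasurableSpace X]

/-- `A` is an atom of the measure `μ`. -/
def MeasureIsAtom (μ : Measure X) (A : Set X) : Prop :=
  MeasurableSet A ∧ 0 < μ A ∧ ∀ B ⊆ A, MeasurableSet B → ¬(0 < μ B ∧ μ B < μ A)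

/-- `f` is a subvector of `g` (`f ⪯ g`). -/
def SubvecL {μ : Measure X} {q : ℝ≥0∞} (f g : Lp ℂ q μ) : Prop :=
  ∀ᵐ t ∂μ, f t ≠ 0 → f t = g t

/-- `f` and `g` are disjointly supported. -/
def DisjSuppL {μ : Measure X} {q : ℝ≥0∞} (f g : Lp ℂ q μ) : Prop :=
  ∀ᵐ t ∂μ, f t * g t = 0

/-- A tree: a set of finite sequences closed under prefixes. -/
def TreeSet (S : Set (List ℕ)) : Prop := ∀ ν ∈ S, ∀ μ' : List ℕ, μ' <+: ν → μ' ∈ S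

/-- `ν'` is a child of `ν`. -/
def NodeChild (ν' ν : List ℕ) : Prop := ∃ n : ℕ, ν' = ν ++ [n]

/-- A disintegration of `L^p(Ω)`. -/
def IsDisintegration (μ : Measure X) (q : ℝ≥0∞) [Fact (1 ≤ q)]
    (S : Set (List ℕ)) (φ : List ℕ → Lp ℂ q μ) : Prop :=
  TreeSet S ∧ S.InjOn φ ∧ (∀ ν ∈ S, φ ν ≠ 0) ∧
  (∀ ν ∈ S, ∀ ν' ∈ S, ν <+: ν' → SubvecL (φ ν') (φ ν)) ∧
  (∀ ν ∈ S, ∀ ν' ∈ S, ¬ ν <+: ν' → ¬ ν' <+: ν → DisjSuppL (φ ν) (φ ν')) ∧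
  (∀ ν ∈ S, (∃ ν' ∈ S, NodeChild ν' ν) →
    HasSum (fun ν' : {ν' // ν' ∈ S ∧ NodeChild ν' ν} => φ ν'.1) (φ ν)) ∧
  Dense (Submodule.span ℂ (φ '' S) : Set (Lp ℂ q μ))

end Defs

set_option linter.unusedSectionVars false
set_option linter.unusedVariables false
set_option maxHeartbeats 1000000

open Filter
open scoped Topology

section A
variable {X : Type*} [MeasurableSpace X] {μ : Measure X} {p : ℝ}

lemma eLpNorm_eq_pInt (hp : 0 < p) (u : X → ℂ) :
    eLpNorm u (ENNReal.ofReal p) μ = (∫⁻ t, (‖u t‖₊ : ℝ≥0∞) ^ p ∂μ) ^ (1 / p) := by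
  rw [eLpNorm_eq_lintegral_rpow_enorm_toReal (by simp [hp]) (by simp),
    ENNReal.toReal_ofReal hp.le]
  rfl

variable [Fact (1 ≤ ENNReal.ofReal p)]

lemma pInt_lt_top (hp : 0 < p) (u : Lp ℂ (ENNReal.ofReal p) μ) :
    ∫⁻ t, (‖u t‖₊ : ℝ≥0∞) ^ p ∂μ < ⊤ := by
  have h1 := Lp.eLpNorm_lt_top u
  rw [eLpNorm_eq_pInt hp] at h1
  by_contra hc
  push_neg at hc
  rw [top_le_iff.mp hc, ENNReal.top_rpow_of_pos (by positivity)] at h1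
  exact absurd h1 (lt_irrefl _)

lemma pInt_mono (hp : 0 < p) {u v : Lp ℂ (ENNReal.ofReal p) μ} (hsv : SubvecL v u) :
    ∫⁻ t, (‖v t‖₊ : ℝ≥0∞) ^ p ∂μ ≤ ∫⁻ t, (‖u t‖₊ : ℝ≥0∞) ^ p ∂μ := by
  refine lintegral_mono_ae (hsv.mono fun t ht => ?_)
  refine ENNReal.rpow_le_rpow ?_ hp.le
  by_cases h : v t = 0
  · simp [h]
  · simp [ht h]

lemma normL_mono (hp : 0 < p) {u v : Lp ℂ (ENNReal.ofReal p) μ} (hsv : SubvecL v u) :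
    ‖v‖ ≤ ‖u‖ := by
  rw [Lp.norm_def, Lp.norm_def]
  refine ENNReal.toReal_mono (Lp.eLpNorm_ne_top u) ?_
  refine eLpNorm_mono_ae (hsv.mono fun t ht => ?_)
  by_cases h : v t = 0
  · simp [h]
  · simp [ht h]

lemma pInt_sub_add (hp : 0 < p) {u v : Lp ℂ (ENNReal.ofReal p) μ} (hsv : SubvecL v u) :
    ∫⁻ t, (‖u t - v t‖₊ : ℝ≥0∞) ^ p ∂μ + ∫⁻ t, (‖v t‖₊ : ℝ≥0∞) ^ p ∂μ
      = ∫⁻ t, (‖u t‖₊ : ℝ≥0∞) ^ p ∂μ := by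
  have hmv : AEMeasurable (fun t => (‖u t - v t‖₊ : ℝ≥0∞) ^ p) μ := by
    exact (((Lp.aestronglyMeasurable u).sub (Lp.aestronglyMeasurable v)).enorm).pow_const p
  rw [← lintegral_add_left' hmv]
  refine lintegral_congr_ae (hsv.mono fun t ht => ?_)
  by_cases h : v t = 0
  · simp [h, ENNReal.zero_rpow_of_pos hp]
  · simp [ht h, ENNReal.zero_rpow_of_pos hp]
end A

lemma konig_branch (T : Set (List ℕ))
    (hpre : ∀ ν ∈ T, ∀ ρ : List ℕ, ρ <+: ν → ρ ∈ T)
    (hfin : ∀ ν ∈ T, {ν' | ν' ∈ T ∧ NodeChild ν' ν}.Finite)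
    (hinf : ∀ n : ℕ, ∃ ν ∈ T, ν.length = n) :
    ∃ b : ℕ → List ℕ, (∀ n, b n ∈ T) ∧ (∀ n, (b n).length = n) ∧
      ∀ n m : ℕ, n ≤ m → b n <+: b m := by
  classical
  set Ext : List ℕ → Prop :=
    fun ν => ∀ n, ν.length ≤ n → ∃ ρ, ρ ∈ T ∧ ν <+: ρ ∧ ρ.length = n with hExt
  have hnilT : ([] : List ℕ) ∈ T := by
    obtain ⟨ν, hν, hl⟩ := hinf 0
    rwa [List.length_eq_zero_iff.mp hl] at hν
  have hnilExt : Ext [] := by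
    intro n _
    obtain ⟨ν, hν, hl⟩ := hinf n
    exact ⟨ν, hν, List.nil_prefix, hl⟩
  -- the step
  have hstep : ∀ ν, (ν ∈ T ∧ Ext ν) → ∃ ν', ((ν' ∈ T ∧ Ext ν') ∧ NodeChild ν' ν) := by
    intro ν ⟨hνT, hνE⟩
    set k := ν.length with hk
    by_contra hno
    push_neg at hno
    -- the set of children of ν lying in T; finite
    have hCfin : {ν' | ν' ∈ T ∧ NodeChild ν' ν}.Finite := hfin ν hνT
    set F : Finset (List ℕ) := hCfin.toFinset with hF
    -- every child in T fails Ext; extract bad levels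
    have hbad : ∀ c : List ℕ, ∃ n, c.length ≤ n ∧
        (c ∈ F → ∀ ρ ∈ T, c <+: ρ → ρ.length ≠ n) := by
      intro c
      by_cases hc : c ∈ F
      · have hcT : c ∈ T ∧ NodeChild c ν := by simpa [hF] using hc
        have hnE : ¬ ∀ n : ℕ, c.length ≤ n → ∃ ρ, ρ ∈ T ∧ c <+: ρ ∧ ρ.length = n :=
          fun hE => hno c ⟨hcT.1, fun n hn => by
            obtain ⟨ρ, h1, h2, h3⟩ := hE n hn; exact ⟨ρ, h1, h2, h3⟩⟩ hcT.2
        push_neg at hnE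
        obtain ⟨n, hn1, hn2⟩ := hnE
        exact ⟨n, hn1, fun _ ρ hρ hp hlen => (hn2 ρ hρ hp) hlen⟩
      · exact ⟨c.length, le_rfl, fun h => absurd h hc⟩
    choose bad hbad1 hbad2 using hbad
    set N := (F.sup bad) + k + 1 with hN
    obtain ⟨ρ, hρT, hρp, hρl⟩ := hνE N (by omega)
    -- the child of ν that is a prefix of ρ
    have hkN : k < N := by omega
    have hν_take : ν = ρ.take k := by
      have := List.prefix_iff_eq_take.mp hρp; rwa [hk]
    have hρlen : k < ρ.length := by omega
    have hcT : ρ.take (k + 1) ∈ T := hpre ρ hρT _ (List.take_prefix _ _)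
    have hclen : (ρ.take (k + 1)).length = k + 1 := by
      rw [List.length_take]; omega
    have hcchild : NodeChild (ρ.take (k + 1)) ν := by
      refine ⟨ρ.get ⟨k, hρlen⟩, ?_⟩
      rw [List.take_succ, ← hν_take]
      simp [List.getElem?_eq_getElem hρlen]
    have hcF : ρ.take (k + 1) ∈ F := by
      rw [hF, Set.Finite.mem_toFinset]
      exact ⟨hcT, hcchild⟩
    have hbc_le : bad (ρ.take (k+1)) ≤ F.sup bad := Finset.le_sup hcF
    have hbc_ge : k + 1 ≤ bad (ρ.take (k+1)) := by
      have := hbad1 (ρ.take (k+1)); omega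
    have hρ'T : ρ.take (bad (ρ.take (k+1))) ∈ T := hpre ρ hρT _ (List.take_prefix _ _)
    have hcρ' : ρ.take (k+1) <+: ρ.take (bad (ρ.take (k+1))) := by
      simp only [List.take_isPrefix_take]
      left; omega
    have hρ'l : (ρ.take (bad (ρ.take (k+1)))).length = bad (ρ.take (k+1)) := by
      rw [List.length_take]; omega
    exact hbad2 _ hcF _ hρ'T hcρ' hρ'l
  choose nxt hnxt using hstep
  let G := {l : List ℕ // l ∈ T ∧ Ext l}
  let bb : ℕ → G := fun n =>
    Nat.rec (⟨[], hnilT, hnilExt⟩ : G) (fun _ y => ⟨nxt y.1 y.2, (hnxt y.1 y.2).1⟩) n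
  refine ⟨fun n => (bb n).1, fun n => (bb n).2.1, ?_, ?_⟩
  · intro n
    induction n with
    | zero => rfl
    | succ m ih =>
      obtain ⟨j, hj⟩ := (hnxt (bb m).1 (bb m).2).2
      show (nxt (bb m).1 (bb m).2).length = m + 1
      rw [hj, List.length_append, ih]
      simp
  · intro n m hnm
    induction m with
    | zero =>
      have : n = 0 := by omega
      subst this; exact List.prefix_refl _
    | succ j ih =>
      rcases Nat.lt_or_ge n (j+1) with h | h
      · have h2 : n ≤ j := by omega
        refine (ih h2).trans ?_
        obtain ⟨a, ha⟩ := (hnxt (bb j).1 (bb j).2).2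
        show (bb j).1 <+: nxt (bb j).1 (bb j).2
        rw [ha]; exact ⟨[a], rfl⟩
      · have : n = j + 1 := by omega
        subst this; exact List.prefix_refl _

section B
variable {X : Type*} [MeasurableSpace X] {μ : Measure X} {q : ℝ≥0∞} [Fact (1 ≤ q)]

lemma coeFn_finset_sum {ι : Type*} (s : Finset ι) (F : ι → Lp ℂ q μ) :
    ⇑(∑ i ∈ s, F i) =ᵐ[μ] fun t => ∑ i ∈ s, F i t := by
  classical
  induction s using Finset.induction with
  | empty => rw [Finset.sum_empty]; exact Lp.coeFn_zero ℂ q μ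
  | insert a s' hni ih =>
    rw [Finset.sum_insert hni]
    filter_upwards [Lp.coeFn_add (F a) (∑ i ∈ s', F i), ih] with t h1 h2
    rw [Finset.sum_insert hni, h1, Pi.add_apply, h2]

lemma subvec_of_tendsto (hq0 : q ≠ 0) {w : ℕ → Lp ℂ q μ} {h v : Lp ℂ q μ}
    (hlim : Tendsto w atTop (𝓝 h)) (hsub : ∀ n, SubvecL (w n) v) : SubvecL h v := by
  have hdist : Tendsto (fun n => dist (w n) h) atTop (𝓝 0) :=
    tendsto_iff_dist_tendsto_zero.mp hlim
  have heq : ∀ n, dist (w n) h = (eLpNorm (⇑(w n) - ⇑h) q μ).toReal := by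
    intro n
    rw [Lp.dist_def]
  have hne : ∀ n, eLpNorm (⇑(w n) - ⇑h) q μ ≠ ⊤ := by
    intro n
    rw [← eLpNorm_congr_ae (Lp.coeFn_sub (w n) h)]
    exact Lp.eLpNorm_ne_top _
  have help : Tendsto (fun n => eLpNorm (⇑(w n) - ⇑h) q μ) atTop (𝓝 0) := by
    rw [← ENNReal.tendsto_toReal_iff hne (by simp)]
    simpa [heq] using hdist
  have him : TendstoInMeasure μ (fun n => ⇑(w n)) atTop ⇑h :=
    tendstoInMeasure_of_tendsto_eLpNorm hq0 (fun n => Lp.aestronglyMeasurable (w n))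
      (Lp.aestronglyMeasurable h) help
  obtain ⟨ns, _, hae⟩ := him.exists_seq_tendsto_ae
  have hall : ∀ᵐ t ∂μ, ∀ i : ℕ, w i t ≠ 0 → w i t = v t := ae_all_iff.mpr hsub
  filter_upwards [hae, hall] with t ht hta hne0
  have hev : ∀ᶠ i in atTop, w (ns i) t = v t := by
    filter_upwards [ht.eventually_ne hne0] with i hi
    exact hta (ns i) hi
  exact tendsto_nhds_unique ht (Tendsto.congr' (hev.mono fun i hi => hi.symm) tendsto_const_nhds)
end B

section C
variable {X : Type*} [MeasurableSpace X] {μ : Measure X} {p : ℝ} [Fact (1 ≤ ENNReal.ofReal p)]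

lemma exists_split (hp : 0 < p) (hna : ∀ A : Set X, ¬ MeasureIsAtom μ A)
    (h : Lp ℂ (ENNReal.ofReal p) μ)
    (hpos : eLpNorm (⇑h) (ENNReal.ofReal p) μ ≠ 0)
    (hfin : ∫⁻ t, (‖h t‖₊ : ℝ≥0∞) ^ p ∂μ < ⊤) :
    ∃ (H' : X → ℂ) (B : Set X), Measurable H' ∧ (⇑h =ᵐ[μ] H') ∧ MeasurableSet B ∧
      0 < ∫⁻ t in B ∩ {s | H' s ≠ 0}, (‖H' t‖₊ : ℝ≥0∞) ^ p ∂μ ∧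
      0 < ∫⁻ t in {s | H' s ≠ 0} \ B, (‖H' t‖₊ : ℝ≥0∞) ^ p ∂μ := by
  classical
  set asm := Lp.aestronglyMeasurable h with hasm
  set H' : X → ℂ := asm.mk ⇑h with hH'
  have hH'm : Measurable H' := asm.stronglyMeasurable_mk.measurable
  have hHH' : ⇑h =ᵐ[μ] H' := asm.ae_eq_mk
  set d : X → ℝ≥0∞ := fun t => (‖H' t‖₊ : ℝ≥0∞) ^ p with hd
  have hdm : Measurable d := (hH'm.nnnorm.coe_nnreal_ennreal).pow_const p
  set ν : Measure X := μ.withDensity d with hν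
  have hνap : ∀ s : Set X, MeasurableSet s → ν s = ∫⁻ t in s, d t ∂μ :=
    fun s hs => withDensity_apply d hs
  set U : Set X := {s | H' s ≠ 0} with hU
  have hUm : MeasurableSet U := (hH'm (measurableSet_singleton 0)).compl
  -- total integral is positive and finite
  have hcongr : ∫⁻ t, d t ∂μ = ∫⁻ t, (‖h t‖₊ : ℝ≥0∞) ^ p ∂μ := by
    refine lintegral_congr_ae (hHH'.mono fun t ht => ?_)
    rw [hd]; simp [ht]
  have hIpos : 0 < ∫⁻ t, d t ∂μ := by
    rcases eq_or_lt_of_le (zero_le : 0 ≤ ∫⁻ t, d t ∂μ) with h0 | h0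
    · exfalso
      apply hpos
      rw [eLpNorm_eq_pInt hp, ← hcongr, ← h0,
        ENNReal.zero_rpow_of_pos (by positivity : (0:ℝ) < 1/p)]
    · exact h0
  have hIfin : ∫⁻ t, d t ∂μ < ⊤ := by rw [hcongr]; exact hfin
  -- the complement of U contributes nothing
  have hUc0 : ∫⁻ t in Uᶜ, d t ∂μ = 0 := by
    have : ∀ᵐ t ∂μ, t ∈ Uᶜ → d t = 0 := by
      refine ae_of_all _ fun t ht => ?_
      have : H' t = 0 := by simpa [hU] using ht
      rw [hd]; simp [this, ENNReal.zero_rpow_of_pos hp]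
    rw [setLIntegral_congr_fun_ae hUm.compl this, lintegral_zero]
  have hνUc : ν Uᶜ = 0 := by rw [hνap _ hUm.compl]; exact hUc0
  have hνU : 0 < ν U := by
    have hsplit : ν U + ν Uᶜ = ν univ := measure_add_measure_compl hUm
    have hνuniv : ν univ = ∫⁻ t, d t ∂μ := by
      rw [hνap _ MeasurableSet.univ, setLIntegral_univ]
    have hU_eq : ν U = ∫⁻ t, d t ∂μ := by
      rw [← hνuniv, ← hsplit, hνUc, add_zero]
    rw [hU_eq]; exact hIpos
  -- the sets where ‖H'‖ is bounded below
  set A : ℕ → Set X := fun n => {t | 1 / (n + 1 : ℝ) ≤ ‖H' t‖} with hA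
  have hAm : ∀ n, MeasurableSet (A n) := fun n =>
    measurableSet_le measurable_const hH'm.norm
  have hAU : ∀ n, A n ⊆ U := by
    intro n t ht
    have h1 : (0:ℝ) < 1 / (n + 1 : ℝ) := by positivity
    have : 0 < ‖H' t‖ := lt_of_lt_of_le h1 ht
    simpa [hU] using norm_pos_iff.mp this
  have hUA : U = ⋃ n, A n := by
    ext t
    simp only [hU, hA, mem_setOf_eq, mem_iUnion]
    constructor
    · intro ht
      obtain ⟨n, hn⟩ := exists_nat_one_div_lt (norm_pos_iff.mpr ht)
      exact ⟨n, hn.le⟩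
    · rintro ⟨n, hn⟩
      refine norm_pos_iff.mp (lt_of_lt_of_le (by positivity) hn)
  obtain ⟨n, hn⟩ : ∃ n, 0 < ν (A n) := by
    by_contra hno
    push_neg at hno
    have hz : ∀ n, ν (A n) = 0 := fun n => le_antisymm (hno n) zero_le
    have : ν U = 0 := by
      rw [hUA]
      exact le_antisymm (le_trans (measure_iUnion_le A) (by simp [hz])) zero_le
    rw [this] at hνU; simp at hνU
  -- lower bound for the density on A n
  set c : ℝ≥0∞ := (ENNReal.ofReal (1 / (n + 1 : ℝ))) ^ p with hcdef
  have hc0 : 0 < c := ENNReal.rpow_pos (by positivity) (by simp)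
  have hcfin : c ≠ ⊤ := ENNReal.rpow_ne_top_of_nonneg hp.le (by simp)
  have hdc : ∀ t ∈ A n, c ≤ d t := by
    intro t ht
    rw [hcdef, hd]
    refine ENNReal.rpow_le_rpow ?_ hp.le
    rw [← enorm_eq_nnnorm, ← ofReal_norm]
    exact ENNReal.ofReal_le_ofReal ht
  have hlow : ∀ B' : Set X, MeasurableSet B' → B' ⊆ A n → c * μ B' ≤ ν B' := by
    intro B' hB'm hB'
    calc c * μ B' = ∫⁻ _ in B', c ∂μ := (setLIntegral_const B' c).symm
    _ ≤ ∫⁻ t in B', d t ∂μ := setLIntegral_mono hdm (fun t ht => hdc t (hB' ht))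
    _ = ν B' := by
        rw [hν, withDensity_apply d hB'm]
  have hμA : 0 < μ (A n) := by
    rcases eq_or_lt_of_le (zero_le : 0 ≤ μ (A n)) with h0 | h0
    · exfalso
      rw [hνap _ (hAm n)] at hn
      rw [setLIntegral_measure_zero _ _ h0.symm] at hn
      simp at hn
    · exact h0
  have hμAfin : μ (A n) < ⊤ := by
    by_contra htop
    push_neg at htop
    have h1 : c * μ (A n) ≤ ν (A n) := hlow _ (hAm n) (subset_refl _)
    have h2 : ν (A n) ≤ ν univ := measure_mono (subset_univ _)
    have h3 : ν univ = ∫⁻ t, d t ∂μ := by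
      rw [hνap _ MeasurableSet.univ, setLIntegral_univ]
    rw [top_le_iff.mp htop, ENNReal.mul_top hc0.ne'] at h1
    rw [top_le_iff.mp h1, h3] at h2
    exact absurd (lt_of_le_of_lt h2 hIfin) (lt_irrefl _)
  -- split A n by non-atomicity
  have hnat := hna (A n)
  rw [MeasureIsAtom] at hnat
  push_neg at hnat
  obtain ⟨B, hBA, hBm, hBpos, hBlt⟩ := hnat (hAm n) hμA
  refine ⟨H', B, hH'm, hHH', hBm, ?_, ?_⟩
  · -- ν (B ∩ U) = ν B ≥ c * μ B > 0
    have h1 : ν B ≤ ν (B ∩ U) + ν (B \ U) := by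
      refine le_trans (measure_mono ?_) (measure_union_le _ _)
      intro t ht
      by_cases h : t ∈ U
      · exact Or.inl ⟨ht, h⟩
      · exact Or.inr ⟨ht, h⟩
    have h2 : ν (B \ U) = 0 :=
      le_antisymm (le_trans (measure_mono (diff_subset_compl B U)) hνUc.le) zero_le
    have h3 : 0 < ν B := lt_of_lt_of_le (by
      have := hlow B hBm hBA
      calc (0:ℝ≥0∞) < c * μ B := by
            exact ENNReal.mul_pos hc0.ne' hBpos.ne'
      _ ≤ ν B := this) le_rfl
    have h4 : 0 < ν (B ∩ U) := by
      rcases eq_or_lt_of_le (zero_le : 0 ≤ ν (B ∩ U)) with h0 | h0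
      · exfalso
        rw [← h0, h2] at h1
        simp at h1
        exact absurd h1 h3.ne'
      · exact h0
    rwa [hνap _ (hBm.inter hUm)] at h4
  · -- ν (U \ B) ≥ ν (A n \ B) ≥ c * μ (A n \ B) > 0
    have hdiffpos : 0 < μ (A n \ B) := by
      rcases eq_or_lt_of_le (zero_le : 0 ≤ μ (A n \ B)) with h0 | h0
      · exfalso
        have : μ (A n) ≤ μ B + μ (A n \ B) := by
          refine le_trans (measure_mono ?_) (measure_union_le _ _)
          intro t ht
          by_cases h : t ∈ B
          · exact Or.inl h
          · exact Or.inr ⟨ht, h⟩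
        rw [← h0] at this
        simp at this
        exact absurd (lt_of_lt_of_le hBlt this) (lt_irrefl _)
      · exact h0
    have h1 : 0 < ν (A n \ B) :=
      lt_of_lt_of_le (ENNReal.mul_pos hc0.ne' hdiffpos.ne') (hlow _ ((hAm n).diff hBm) diff_subset)
    have h2 : ν (A n \ B) ≤ ν (U \ B) := measure_mono (fun t ht => ⟨hAU n ht.1, ht.2⟩)
    have h3 : 0 < ν (U \ B) := lt_of_lt_of_le h1 h2
    rwa [hνap _ (hUm.diff hBm)] at h3
end C

theorem stmt16 {X : Type*} [MeasurableSpace X] (μ : Measure X)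
    -- `Ω` is nonzero and non-atomic:
    (hnz : ∃ A : Set X, MeasurableSet A ∧ 0 < μ A ∧ μ A < ⊤)
    (hna : ∀ A : Set X, ¬ MeasureIsAtom μ A)
    (p : ℝ) (hp : 1 ≤ p) [Fact (1 ≤ ENNReal.ofReal p)]
    (S : Set (List ℕ)) (φ : List ℕ → Lp ℂ (ENNReal.ofReal p) μ)
    (hφ : IsDisintegration μ (ENNReal.ofReal p) S φ)
    (hroot : ‖φ []‖ = 1)
    -- the domain tree is finitely branching at every node having a child with
    -- nonzero image:
    (hfb : ∀ ν ∈ S, (∃ ν' ∈ S, NodeChild ν' ν ∧ φ ν' ≠ 0) →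
      {ν' ∈ S | NodeChild ν' ν}.Finite) :
    ∀ ε : ℝ, 0 < ε → ∃ n : ℕ, ∀ ν ∈ S, ν.length = n → ‖φ ν‖ < ε := by
  classical
  intro ε hε
  by_contra hcon
  push_neg at hcon
  obtain ⟨hTree, hInj, hNZ, hAnti, hDisj, hSum, hDense⟩ := hφ
  have hp0 : 0 < p := lt_of_lt_of_le one_pos hp
  have hq0 : ENNReal.ofReal p ≠ 0 := by simp [hp0]
  -- the subtree of nodes with large norm
  set T : Set (List ℕ) := {ν | ν ∈ S ∧ ε ≤ ‖φ ν‖} with hT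
  have hTpre : ∀ ν ∈ T, ∀ ρ : List ℕ, ρ <+: ν → ρ ∈ T := by
    intro ν hν ρ hρ
    have hρS : ρ ∈ S := hTree ν hν.1 ρ hρ
    exact ⟨hρS, le_trans hν.2 (normL_mono hp0 (hAnti ρ hρS ν hν.1 hρ))⟩
  have hTfin : ∀ ν ∈ T, {ν' | ν' ∈ T ∧ NodeChild ν' ν}.Finite := by
    intro ν hν
    rcases Set.eq_empty_or_nonempty {ν' | ν' ∈ T ∧ NodeChild ν' ν} with he | ⟨c, hc⟩
    · rw [he]; exact Set.finite_empty
    · have hfb' := hfb ν hν.1 ⟨c, hc.1.1, hc.2, hNZ c hc.1.1⟩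
      exact hfb'.subset (fun x hx => ⟨hx.1.1, hx.2⟩)
  have hTinf : ∀ n : ℕ, ∃ ν ∈ T, ν.length = n := by
    intro n; obtain ⟨ν, hνS, hl, hn⟩ := hcon n; exact ⟨ν, ⟨hνS, hn⟩, hl⟩
  obtain ⟨b, hbT, hblen, hbpre⟩ := konig_branch T hTpre hTfin hTinf
  have hbS : ∀ n, b n ∈ S := fun n => (hbT n).1
  have hbnorm : ∀ n, ε ≤ ‖φ (b n)‖ := fun n => (hbT n).2
  have hbsub : ∀ n m : ℕ, n ≤ m → SubvecL (φ (b m)) (φ (b n)) :=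
    fun n m hnm => hAnti (b n) (hbS n) (b m) (hbS m) (hbpre n m hnm)
  -- the p-integrals along the branch form an antitone sequence
  set J : ℕ → ℝ≥0∞ := fun n => ∫⁻ t, (‖φ (b n) t‖₊ : ℝ≥0∞) ^ p ∂μ with hJ
  have hJfin : ∀ n, J n < ⊤ := fun n => pInt_lt_top hp0 _
  set s : ℕ → ℝ := fun n => (J n).toReal with hs
  have hs_anti : ∀ n m : ℕ, n ≤ m → s m ≤ s n := fun n m hnm =>
    ENNReal.toReal_mono (hJfin n).ne (pInt_mono hp0 (hbsub n m hnm))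
  have hs_cauchy : CauchySeq s := by
    refine Filter.Tendsto.cauchySeq (x := ⨅ n, s n)
      (tendsto_atTop_ciInf (fun n m hnm => hs_anti n m hnm) ⟨0, fun x hx => ?_⟩)
    obtain ⟨n, rfl⟩ := hx
    exact ENNReal.toReal_nonneg
  -- distance formula along the branch
  have hdisteq : ∀ n m : ℕ, n ≤ m →
      dist (φ (b n)) (φ (b m)) = (s n - s m) ^ (1/p) := by
    intro n m hnm
    rw [Lp.dist_def]
    have h2 := pInt_sub_add hp0 (hbsub n m hnm)
    have h3 : ∫⁻ t, (‖φ (b n) t - φ (b m) t‖₊ : ℝ≥0∞) ^ p ∂μ = J n - J m :=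
      ENNReal.eq_sub_of_add_eq (hJfin m).ne h2
    have h3' : ∫⁻ t, (‖(⇑(φ (b n)) - ⇑(φ (b m))) t‖₊ : ℝ≥0∞) ^ p ∂μ = J n - J m := by
      simpa [Pi.sub_apply] using h3
    have h1 : eLpNorm (⇑(φ (b n)) - ⇑(φ (b m))) (ENNReal.ofReal p) μ
        = (J n - J m) ^ (1/p) := by
      rw [eLpNorm_eq_pInt hp0, h3']
    rw [h1, ← ENNReal.toReal_rpow,
      ENNReal.toReal_sub_of_le (pInt_mono hp0 (hbsub n m hnm)) (hJfin n).ne]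
  have hcauchy : CauchySeq (fun n => φ (b n)) := by
    rw [Metric.cauchySeq_iff]
    intro ε' hε'
    obtain ⟨N, hN⟩ := Metric.cauchySeq_iff.mp hs_cauchy (ε' ^ p)
      (Real.rpow_pos_of_pos hε' p)
    refine ⟨N, fun m hm n hn => ?_⟩
    have key : ∀ a c : ℕ, a ≤ c → a ≥ N → c ≥ N → dist (φ (b a)) (φ (b c)) < ε' := by
      intro a c hac ha hc
      rw [hdisteq a c hac]
      have hlt : s a - s c < ε' ^ p := by
        have := hN a ha c hc
        rw [Real.dist_eq] at this
        exact lt_of_le_of_lt (le_abs_self _) this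
      have hnn : 0 ≤ s a - s c := sub_nonneg.mpr (hs_anti a c hac)
      calc (s a - s c) ^ (1/p) < (ε' ^ p) ^ (1/p) :=
            Real.rpow_lt_rpow hnn hlt (by positivity)
      _ = ε' := by rw [one_div, Real.rpow_rpow_inv hε'.le hp0.ne']
    rcases le_total m n with hmn | hmn
    · exact key m n hmn hm hn
    · rw [dist_comm]; exact key n m hmn hn hm
  obtain ⟨h, hlim⟩ := cauchySeq_tendsto_of_complete hcauchy
  have hnormh : ε ≤ ‖h‖ :=
    ge_of_tendsto hlim.norm (Filter.Eventually.of_forall hbnorm)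
  have hsubh : ∀ n, SubvecL h (φ (b n)) := by
    intro n
    have hlim' : Filter.Tendsto (fun k => φ (b (k + n))) Filter.atTop (𝓝 h) :=
      hlim.comp (tendsto_add_atTop_nat n)
    exact subvec_of_tendsto hq0 hlim' (fun k => hbsub n (k + n) (by omega))
  -- split the limit using non-atomicity
  have hepos : eLpNorm (⇑h) (ENNReal.ofReal p) μ ≠ 0 := by
    intro h0
    rw [Lp.norm_def, h0] at hnormh
    simp at hnormh
    exact absurd (lt_of_lt_of_le hε hnormh) (lt_irrefl _)
  obtain ⟨H', B, hH'm, hHH', hBm, hm1, hm2⟩ :=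
    exists_split hp0 hna h hepos (pInt_lt_top hp0 h)
  set U : Set X := {t | H' t ≠ 0} with hU
  have hUm : MeasurableSet U := (hH'm (measurableSet_singleton 0)).compl
  set m1 : ℝ≥0∞ := ∫⁻ t in B ∩ U, (‖H' t‖₊ : ℝ≥0∞) ^ p ∂μ with hm1def
  set m2 : ℝ≥0∞ := ∫⁻ t in U \ B, (‖H' t‖₊ : ℝ≥0∞) ^ p ∂μ with hm2def
  have hIH' : ∫⁻ t, (‖H' t‖₊ : ℝ≥0∞) ^ p ∂μ < ⊤ := by
    have : ∫⁻ t, (‖H' t‖₊ : ℝ≥0∞) ^ p ∂μ = ∫⁻ t, (‖h t‖₊ : ℝ≥0∞) ^ p ∂μ := by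
      refine lintegral_congr_ae (hHH'.mono fun t ht => ?_)
      exact congrArg (fun z : ℂ => ((‖z‖₊ : ℝ≥0∞)) ^ p) ht.symm
    rw [this]
    exact pInt_lt_top hp0 h
  have hm1fin : m1 < ⊤ := lt_of_le_of_lt (setLIntegral_le_lintegral _ _) hIH'
  have hm2fin : m2 < ⊤ := lt_of_le_of_lt (setLIntegral_le_lintegral _ _) hIH'
  -- the subvector g of h supported on B
  have hmem : MemLp H' (ENNReal.ofReal p) μ := (Lp.memLp h).ae_eq hHH'
  have hgmem : MemLp (B.indicator H') (ENNReal.ofReal p) μ := hmem.indicator hBm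
  set g : Lp ℂ (ENNReal.ofReal p) μ := hgmem.toLp _ with hgdef
  have hgcoe : ⇑g =ᵐ[μ] B.indicator H' := hgmem.coeFn_toLp
  -- the gap δ
  set δ : ℝ≥0∞ := (2⁻¹ : ℝ≥0∞) ^ p * min m1 m2 with hδdef
  have hδ0 : δ ≠ 0 :=
    (ENNReal.mul_pos (ENNReal.rpow_pos (by norm_num) (by norm_num)).ne'
      (lt_min hm1 hm2).ne').ne'
  have hδfin : δ ≠ ⊤ := by
    refine ENNReal.mul_ne_top (ENNReal.rpow_ne_top_of_nonneg hp0.le (by norm_num)) ?_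
    exact (lt_of_le_of_lt (min_le_left _ _) hm1fin).ne
  -- main estimate: every element of the span is δ-far from g (in p-integral)
  have hmain : ∀ f : Lp ℂ (ENNReal.ofReal p) μ,
      f ∈ (Submodule.span ℂ (φ '' S) : Set (Lp ℂ (ENNReal.ofReal p) μ)) →
      δ ≤ ∫⁻ t, (‖f t - g t‖₊ : ℝ≥0∞) ^ p ∂μ := by
    intro f hf
    rw [SetLike.mem_coe, Submodule.mem_span_set'] at hf
    obtain ⟨nn, coef, vv, hsum⟩ := hf
    choose σ hσS hσφ using fun i => (vv i).2
    set onB : Fin nn → Prop := fun i => σ i = b (σ i).length with honB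
    set cc : ℂ := ∑ i ∈ Finset.univ.filter onB, coef i with hcc
    -- each basis node acts as H' or as 0 on the support of h
    have hkey : ∀ i : Fin nn, ∀ᵐ t ∂μ,
        H' t ≠ 0 → (φ (σ i)) t = (if onB i then H' t else 0) := by
      intro i
      by_cases hi : onB i
      · have hsv : SubvecL h (φ (b (σ i).length)) := hsubh _
        filter_upwards [hsv, hHH'] with t h1 h2 hne
        rw [if_pos hi, hi, ← h2]
        exact (h1 (by rw [h2]; exact hne)).symm
      · have hdisj : DisjSuppL (φ (σ i)) (φ (b (σ i).length)) := by
          apply hDisj _ (hσS i) _ (hbS _)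
          · intro hpre
            exact hi (hpre.eq_of_length (by rw [hblen]))
          · intro hpre
            exact hi ((hpre.eq_of_length (by rw [hblen])).symm)
        have hsv : SubvecL h (φ (b (σ i).length)) := hsubh _
        filter_upwards [hdisj, hsv, hHH'] with t h1 h2 h3 hne
        rw [if_neg hi]
        have hbt : (φ (b (σ i).length)) t = h t :=
          (h2 (by rw [h3]; exact hne)).symm
        have hmul : (φ (σ i)) t * h t = 0 := by rw [← hbt]; exact h1
        rcases mul_eq_zero.mp hmul with hz | hz
        · exact hz
        · rw [h3] at hz; exact absurd hz hne
    -- f is a.e. the pointwise linear combination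
    have hfs : ⇑f =ᵐ[μ] fun t => ∑ i : Fin nn, coef i • (φ (σ i)) t := by
      have h1 : ⇑f =ᵐ[μ] ⇑(∑ i : Fin nn, coef i • ((vv i : Lp ℂ (ENNReal.ofReal p) μ))) := by
        rw [hsum]
      refine h1.trans ((coeFn_finset_sum Finset.univ _).trans ?_)
      have h2 : ∀ᵐ t ∂μ, ∀ i : Fin nn,
          (coef i • ((vv i : Lp ℂ (ENNReal.ofReal p) μ))) t
            = coef i • ((vv i : Lp ℂ (ENNReal.ofReal p) μ)) t :=
        ae_all_iff.mpr (fun i => Lp.coeFn_smul (coef i) _)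
      filter_upwards [h2] with t ht
      refine Finset.sum_congr rfl fun i _ => ?_
      rw [ht i, hσφ i]
    -- the pointwise description of f - g on the support of H'
    have hae : ∀ᵐ t ∂μ, H' t ≠ 0 →
        f t - g t = (if t ∈ B then (cc - 1) * H' t else cc * H' t) := by
      have hk : ∀ᵐ t ∂μ, ∀ i : Fin nn,
          H' t ≠ 0 → (φ (σ i)) t = (if onB i then H' t else 0) := ae_all_iff.mpr hkey
      filter_upwards [hk, hfs, hgcoe] with t h1 h2 h3 hne
      have hft : f t = cc * H' t := by
        rw [h2]
        have e1 : ∀ i : Fin nn, coef i • (φ (σ i)) t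
            = (if onB i then coef i • H' t else 0) := by
          intro i
          rw [h1 i hne]
          split <;> simp
        calc ∑ i : Fin nn, coef i • (φ (σ i)) t
            = ∑ i : Fin nn, (if onB i then coef i • H' t else 0) :=
              Finset.sum_congr rfl fun i _ => e1 i
        _ = ∑ i ∈ Finset.univ.filter onB, coef i • H' t := (Finset.sum_filter _ _).symm
        _ = cc * H' t := by rw [← Finset.sum_smul, smul_eq_mul]
      by_cases htB : t ∈ B
      · rw [if_pos htB, h3, Set.indicator_of_mem htB, hft]; ring
      · rw [if_neg htB, h3, Set.indicator_of_notMem htB, hft]; ring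
    -- lower bound function
    set LB : X → ℝ≥0∞ := fun t =>
      (B ∩ U).indicator (fun t => (‖cc - 1‖₊ : ℝ≥0∞) ^ p * (‖H' t‖₊ : ℝ≥0∞) ^ p) t
      + (U \ B).indicator (fun t => (‖cc‖₊ : ℝ≥0∞) ^ p * (‖H' t‖₊ : ℝ≥0∞) ^ p) t
      with hLBdef
    have hLB_le : ∀ᵐ t ∂μ, LB t ≤ (‖f t - g t‖₊ : ℝ≥0∞) ^ p := by
      filter_upwards [hae] with t h1
      by_cases htU : t ∈ U
      · have hne : H' t ≠ 0 := htU
        by_cases htB : t ∈ B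
        · have ht1 : t ∈ B ∩ U := ⟨htB, htU⟩
          have ht2 : t ∉ U \ B := fun hh => hh.2 htB
          rw [hLBdef]
          simp only [Set.indicator_of_mem ht1, Set.indicator_of_notMem ht2, add_zero]
          rw [h1 hne, if_pos htB, nnnorm_mul, ENNReal.coe_mul,
            ENNReal.mul_rpow_of_nonneg _ _ hp0.le]
        · have ht1 : t ∉ B ∩ U := fun hh => htB hh.1
          have ht2 : t ∈ U \ B := ⟨htU, htB⟩
          rw [hLBdef]
          simp only [Set.indicator_of_notMem ht1, Set.indicator_of_mem ht2, zero_add]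
          rw [h1 hne, if_neg htB, nnnorm_mul, ENNReal.coe_mul,
            ENNReal.mul_rpow_of_nonneg _ _ hp0.le]
      · have ht1 : t ∉ B ∩ U := fun hh => htU hh.2
        have ht2 : t ∉ U \ B := fun hh => htU hh.1
        rw [hLBdef]
        simp only [Set.indicator_of_notMem ht1, Set.indicator_of_notMem ht2, add_zero]
        exact zero_le
    have hdm : Measurable fun t => (‖H' t‖₊ : ℝ≥0∞) ^ p :=
      (hH'm.nnnorm.coe_nnreal_ennreal).pow_const p
    have hint : ∫⁻ t, LB t ∂μ
        = (‖cc - 1‖₊ : ℝ≥0∞) ^ p * m1 + (‖cc‖₊ : ℝ≥0∞) ^ p * m2 := by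
      rw [hLBdef]
      rw [lintegral_add_left ((hdm.const_mul _).indicator (hBm.inter hUm))]
      rw [lintegral_indicator (hBm.inter hUm), lintegral_indicator (hUm.diff hBm)]
      rw [lintegral_const_mul _ hdm, lintegral_const_mul _ hdm]
    -- either ‖cc-1‖ or ‖cc‖ is at least 1/2
    have hcase : (2⁻¹ : ℝ≥0∞) ≤ (‖cc - 1‖₊ : ℝ≥0∞) ∨ (2⁻¹ : ℝ≥0∞) ≤ (‖cc‖₊ : ℝ≥0∞) := by
      by_contra hcon2
      push_neg at hcon2
      obtain ⟨hc1, hc2⟩ := hcon2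
      have e1 : ‖cc - 1‖ < 1/2 := by
        have := hc1
        rw [show ((2:ℝ≥0∞))⁻¹ = ENNReal.ofReal (1/2) by
          rw [ENNReal.ofReal_div_of_pos (by norm_num)]; norm_num,
          ← enorm_eq_nnnorm, ← ofReal_norm] at this
        have := (ENNReal.ofReal_lt_ofReal_iff_of_nonneg (norm_nonneg _)).mp this
        linarith
      have e2 : ‖cc‖ < 1/2 := by
        have := hc2
        rw [show ((2:ℝ≥0∞))⁻¹ = ENNReal.ofReal (1/2) by
          rw [ENNReal.ofReal_div_of_pos (by norm_num)]; norm_num,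
          ← enorm_eq_nnnorm, ← ofReal_norm] at this
        have := (ENNReal.ofReal_lt_ofReal_iff_of_nonneg (norm_nonneg _)).mp this
        linarith
      have hval : ((cc - 1) - cc) = -1 := by ring
      have hle := norm_sub_le (cc - 1) cc
      rw [hval, norm_neg, norm_one] at hle
      linarith
    have hstep : δ ≤ ∫⁻ t, LB t ∂μ := by
      rw [hint, hδdef]
      rcases hcase with hcs | hcs
      · refine le_trans ?_ (le_add_right le_rfl)
        exact mul_le_mul' (ENNReal.rpow_le_rpow hcs hp0.le) (min_le_left _ _)
      · refine le_trans ?_ (le_add_left le_rfl)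
        exact mul_le_mul' (ENNReal.rpow_le_rpow hcs hp0.le) (min_le_right _ _)
    exact le_trans hstep (lintegral_mono_ae hLB_le)
  -- contradiction with density
  set r0 : ℝ := (δ ^ (1/p)).toReal with hr0def
  have hr0 : 0 < r0 := by
    rw [hr0def]
    refine ENNReal.toReal_pos ?_ ?_
    · exact (ENNReal.rpow_pos (lt_of_le_of_ne zero_le (Ne.symm hδ0))
        hδfin).ne'
    · exact ENNReal.rpow_ne_top_of_nonneg (by positivity) hδfin
  have hclos : g ∈ closure (Submodule.span ℂ (φ '' S) : Set (Lp ℂ (ENNReal.ofReal p) μ)) :=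
    hDense g
  rw [Metric.mem_closure_iff] at hclos
  obtain ⟨f, hfspan, hdistgf⟩ := hclos r0 hr0
  have hge : r0 ≤ dist g f := by
    rw [dist_eq_norm, norm_sub_rev, Lp.norm_def]
    refine ENNReal.toReal_mono (Lp.eLpNorm_ne_top (f - g)) ?_
    rw [eLpNorm_congr_ae (Lp.coeFn_sub f g), eLpNorm_eq_pInt hp0]
    refine ENNReal.rpow_le_rpow ?_ (by positivity)
    exact le_trans (hmain f hfspan) (le_of_eq (lintegral_congr fun t => rfl))
  exact absurd hdistgf (not_lt.mpr hge)
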